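/- If G is a 2-Frobenius group with normal series 1 ◁ H ◁ K ◁ G such that the prime graph of G equals that of PGL(2,9) (vertex set {2,3,5}, single edge {2,5}), then π(K/H) = {3} and π(H) ∪ π(G/K) ⊆ {2,5}. -/

import Mathlib

/-- `G` is a Frobenius group with kernel `K` and complement `C`:
`K` is a nontrivial proper normal subgroup, `C` a nontrivial complement to
it, and conjugation by nonidentity elements of `C` fixes no nonidentity
element of `K`. -/
def IsFrobeniusWith (G : Type*) [Group G] (K C : Subgroup G) : Prop :=
  K.Normal ∧ K ⊓ C = ⊥ ∧ K ⊔ C = ⊤ ∧ K ≠ ⊥ ∧ C ≠ ⊥ ∧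
    ∀ c ∈ C, c ≠ 1 → ∀ k ∈ K, c * k * c⁻¹ = k → k = 1

/-- `G` is a 2-Frobenius group with normal series `1 ◁ H ◁ K ◁ G`: `K` is a
Frobenius group with kernel `H`, and `G/H` is a Frobenius group with kernel
`K/H`. -/
def Is2FrobeniusWith (G : Type*) [Group G] (H K : Subgroup G)
    [H.Normal] [K.Normal] : Prop :=
  H ≤ K ∧
    (∃ C : Subgroup K, IsFrobeniusWith K (H.subgroupOf K) C) ∧
    (∃ C' : Subgroup (G ⧸ H),
      IsFrobeniusWith (G ⧸ H) (K.map (QuotientGroup.mk' H)) C')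

open scoped Pointwise

section FrobeniusLemmas

variable {Γ : Type*} [Group Γ] {N C : Subgroup Γ}

/-- Decomposition `g = n * c` in a group with `N ⊔ C = ⊤`, `N` normal. -/
lemma frob_decomp (hN : N.Normal) (hsup : N ⊔ C = ⊤) (g : Γ) :
    ∃ n ∈ N, ∃ c ∈ C, g = n * c := by
  have hg2 : g ∈ ((N : Set Γ) * (C : Set Γ)) := by
    rw [← Subgroup.normal_mul]
    exact hsup.ge (Subgroup.mem_top g)
  rw [Set.mem_mul] at hg2
  obtain ⟨n, hn, c, hc, hnc⟩ := hg2
  exact ⟨n, hn, c, hc, hnc.symm⟩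

/-- In a Frobenius group, for `c ≠ 1` in the complement, the "twisted
commutator" map is surjective on the kernel. -/
lemma frob_conj_surj [Finite Γ] (hF : IsFrobeniusWith Γ N C) {c : Γ} (hc : c ∈ C)
    (hc1 : c ≠ 1) (n : Γ) (hn : n ∈ N) : ∃ x ∈ N, x⁻¹ * (c * x * c⁻¹) = n := by
  obtain ⟨hNn, hinf, hsup, -, -, hfpf⟩ := hF
  let φ : ↥N → ↥N := fun x =>
    ⟨(x : Γ)⁻¹ * (c * (x : Γ) * c⁻¹), N.mul_mem (N.inv_mem x.2) (hNn.conj_mem _ x.2 c)⟩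
  have hinj : Function.Injective φ := by
    intro x y hxy
    have h1 : (x : Γ)⁻¹ * (c * (x : Γ) * c⁻¹) = (y : Γ)⁻¹ * (c * (y : Γ) * c⁻¹) :=
      congrArg Subtype.val hxy
    have h3 : c * (x : Γ) * c⁻¹ = (x : Γ) * ((y : Γ)⁻¹ * (c * (y : Γ) * c⁻¹)) := by
      rw [← h1]; group
    have key : c * ((x : Γ) * (y : Γ)⁻¹) * c⁻¹ = (x : Γ) * (y : Γ)⁻¹ := by
      calc c * ((x : Γ) * (y : Γ)⁻¹) * c⁻¹
          = (c * (x : Γ) * c⁻¹) * (c * (y : Γ)⁻¹ * c⁻¹) := by group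
        _ = ((x : Γ) * ((y : Γ)⁻¹ * (c * (y : Γ) * c⁻¹))) * (c * (y : Γ)⁻¹ * c⁻¹) := by
            rw [h3]
        _ = (x : Γ) * (y : Γ)⁻¹ := by group
    have hmem : (x : Γ) * (y : Γ)⁻¹ ∈ N := N.mul_mem x.2 (N.inv_mem y.2)
    have := hfpf c hc hc1 _ hmem key
    have hxy' : (x : Γ) = (y : Γ) := by
      have h4 : (x : Γ) = (y : Γ) := mul_inv_eq_one.mp this
      exact h4
    exact Subtype.ext hxy'
  have hsurj : Function.Surjective φ := Finite.injective_iff_surjective.mp hinj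
  obtain ⟨x, hx⟩ := hsurj ⟨n, hn⟩
  exact ⟨(x : Γ), x.2, congrArg Subtype.val hx⟩

/-- In a Frobenius group, the centralizer of a nontrivial kernel element is
contained in the kernel. -/
lemma frob_mem_of_conj_eq [Finite Γ] (hF : IsFrobeniusWith Γ N C) {g n : Γ}
    (hn : n ∈ N) (hn1 : n ≠ 1) (hgn : g * n * g⁻¹ = n) : g ∈ N := by
  by_contra hg
  obtain ⟨k, hk, c, hc, hgeq⟩ := frob_decomp hF.1 hF.2.2.1 g
  subst hgeq
  have hc1 : c ≠ 1 := by
    rintro rfl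
    rw [mul_one] at hg
    exact hg hk
  obtain ⟨x, hx, hxc⟩ := frob_conj_surj hF hc hc1 k hk
  have hgx : k * c = x⁻¹ * (c * x) := by rw [← hxc]; group
  rw [hgx] at hgn
  have key : c * (x * n * x⁻¹) * c⁻¹ = x * n * x⁻¹ := by
    calc c * (x * n * x⁻¹) * c⁻¹
        = x * ((x⁻¹ * (c * x)) * n * (x⁻¹ * (c * x))⁻¹) * x⁻¹ := by group
      _ = x * n * x⁻¹ := by rw [hgn]
  have hmem : x * n * x⁻¹ ∈ N := N.mul_mem (N.mul_mem hx hn) (N.inv_mem hx)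
  have hone := hF.2.2.2.2.2 c hc hc1 _ hmem key
  apply hn1
  have h1 : x * n = x := mul_inv_eq_one.mp hone
  calc n = x⁻¹ * (x * n) := by group
    _ = x⁻¹ * x := by rw [h1]
    _ = 1 := by group

/-- For a normal subgroup with a complement, the index equals the cardinality
of the complement. -/
lemma frob_index_eq_card_compl [Finite Γ] (hN : N.Normal) (hinf : N ⊓ C = ⊥)
    (hsup : N ⊔ C = ⊤) : N.index = Nat.card C := by
  let f : ↥C →* Γ ⧸ N := (QuotientGroup.mk' N).comp C.subtype
  have hbij : Function.Bijective f := by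
    constructor
    · intro x y hxy
      have hxy' : ((x : Γ) : Γ ⧸ N) = ((y : Γ) : Γ ⧸ N) := hxy
      have h1 : (x : Γ)⁻¹ * (y : Γ) ∈ N := QuotientGroup.eq.mp hxy'
      have h2 : (x : Γ)⁻¹ * (y : Γ) ∈ C := C.mul_mem (C.inv_mem x.2) y.2
      have h3 : (x : Γ)⁻¹ * (y : Γ) ∈ N ⊓ C := ⟨h1, h2⟩
      rw [hinf, Subgroup.mem_bot] at h3
      exact Subtype.ext (inv_mul_eq_one.mp h3)
    · intro q
      obtain ⟨g, rfl⟩ := QuotientGroup.mk'_surjective N q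
      obtain ⟨n, hn, c, hc, rfl⟩ := frob_decomp hN hsup g
      refine ⟨⟨c, hc⟩, ?_⟩
      show ((c : Γ) : Γ ⧸ N) = ((n * c : Γ) : Γ ⧸ N)
      rw [QuotientGroup.mk_mul]
      have : ((n : Γ) : Γ ⧸ N) = 1 := (QuotientGroup.eq_one_iff n).mpr hn
      rw [this, one_mul]
  calc N.index = Nat.card (Γ ⧸ N) := N.index_eq_card
    _ = Nat.card ↥C := (Nat.card_eq_of_bijective f hbij).symm

/-- Kernel and complement of a Frobenius group have coprime orders. -/
lemma frob_not_dvd_card_kernel [Finite Γ] (hF : IsFrobeniusWith Γ N C) {p : ℕ}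
    (hp : p.Prime) (hpC : p ∣ Nat.card ↥C) : ¬ p ∣ Nat.card ↥N := by
  haveI : Fact p.Prime := ⟨hp⟩
  haveI := hF.1
  haveI : Fintype ↥C := Fintype.ofFinite _
  rw [Nat.card_eq_fintype_card] at hpC
  obtain ⟨c₀, hc₀⟩ := exists_prime_orderOf_dvd_card p hpC
  have hcC : (c₀ : Γ) ∈ C := c₀.2
  have hordc : orderOf (c₀ : Γ) = p :=
    hc₀ ▸ orderOf_injective C.subtype C.subtype_injective c₀
  have hc1 : (c₀ : Γ) ≠ 1 := by
    intro h
    rw [h, orderOf_one] at hordc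
    exact hp.one_lt.ne' hordc.symm
  letI : MulAction ↥(Subgroup.zpowers (c₀ : Γ)) ↥N :=
    MulAction.compHom ↥N ((MulAut.conjNormal (H := N)).comp (Subgroup.zpowers (c₀ : Γ)).subtype)
  have hP : IsPGroup p ↥(Subgroup.zpowers (c₀ : Γ)) :=
    IsPGroup.of_card (n := 1) (by rw [Nat.card_zpowers, hordc, pow_one])
  have hfix : ∀ x : ↥N,
      x ∈ MulAction.fixedPoints ↥(Subgroup.zpowers (c₀ : Γ)) ↥N ↔ x = 1 := by
    intro x
    constructor
    · intro hx
      have h1 := hx (⟨(c₀ : Γ), Subgroup.mem_zpowers _⟩ : ↥(Subgroup.zpowers (c₀ : Γ)))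
      have h2 : MulAut.conjNormal (c₀ : Γ) x = x := h1
      have h3 : (c₀ : Γ) * (x : Γ) * (c₀ : Γ)⁻¹ = (x : Γ) := by
        rw [← MulAut.conjNormal_apply, h2]
      have := hF.2.2.2.2.2 _ hcC hc1 _ x.2 h3
      exact Subtype.ext this
    · rintro rfl
      intro g
      show MulAut.conjNormal ((g : Γ)) (1 : ↥N) = 1
      exact map_one _
  have hcard1 : Nat.card ↑(MulAction.fixedPoints ↥(Subgroup.zpowers (c₀ : Γ)) ↥N) = 1 := by
    rw [Nat.card_eq_one_iff_unique]
    constructor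
    · constructor
      rintro ⟨x, hx⟩ ⟨y, hy⟩
      have : x = y := by rw [(hfix x).mp hx, (hfix y).mp hy]
      exact Subtype.ext this
    · exact ⟨⟨1, (hfix 1).mpr rfl⟩⟩
  have hmod := hP.card_modEq_card_fixedPoints ↥N
  rw [hcard1] at hmod
  intro hdvd
  have h0 : Nat.card ↥N ≡ 0 [MOD p] := (Nat.modEq_zero_iff_dvd).mpr hdvd
  have h1 : (1 : ℕ) ≡ 0 [MOD p] := hmod.symm.trans h0
  have : p ∣ 1 := (Nat.modEq_zero_iff_dvd).mp h1
  exact hp.ne_one (Nat.dvd_one.mp this)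

/-- An involution in a Frobenius complement inverts every element of the
kernel. -/
lemma frob_involution_inverts [Finite Γ] (hF : IsFrobeniusWith Γ N C) {c : Γ}
    (hc : c ∈ C) (hcc : c * c = 1) (hc1 : c ≠ 1) {n : Γ} (hn : n ∈ N) :
    c * n * c⁻¹ = n⁻¹ := by
  obtain ⟨x, hx, hxc⟩ := frob_conj_surj hF hc hc1 n hn
  have hcinv : c⁻¹ = c := inv_eq_of_mul_eq_one_right hcc
  rw [← hxc, hcinv, eq_comm, inv_eq_iff_mul_eq_one]
  calc x⁻¹ * (c * x * c) * (c * (x⁻¹ * (c * x * c)) * c)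
      = (x⁻¹ * c * x) * (c * c) * (x⁻¹ * c * x) * (c * c) := by group
    _ = (x⁻¹ * c * x) * 1 * (x⁻¹ * c * x) * 1 := by rw [hcc]
    _ = x⁻¹ * (c * c) * x := by group
    _ = x⁻¹ * 1 * x := by rw [hcc]
    _ = 1 := by group

/-- A Frobenius complement contains at most one involution. -/
lemma frob_unique_involution [Finite Γ] (hF : IsFrobeniusWith Γ N C) {c c' : Γ}
    (hc : c ∈ C) (hc' : c' ∈ C) (hcc : c * c = 1) (hc'c' : c' * c' = 1)
    (hc1 : c ≠ 1) (hc'1 : c' ≠ 1) : c = c' := by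
  obtain ⟨n₀, hn₀1⟩ := Subgroup.ne_bot_iff_exists_ne_one.mp hF.2.2.2.1
  have hn₀mem : (n₀ : Γ) ∈ N := n₀.2
  have hn₀ne : (n₀ : Γ) ≠ 1 := fun h => hn₀1 (Subtype.ext h)
  have hd : c'⁻¹ * c ∈ C := C.mul_mem (C.inv_mem hc') hc
  have hcinv' : c'⁻¹ = c' := inv_eq_of_mul_eq_one_right hc'c'
  have hfix : (c'⁻¹ * c) * (n₀ : Γ) * (c'⁻¹ * c)⁻¹ = (n₀ : Γ) := by
    have h1 := frob_involution_inverts hF hc hcc hc1 hn₀mem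
    have h2 := frob_involution_inverts hF hc' hc'c' hc'1 (N.inv_mem hn₀mem)
    calc (c'⁻¹ * c) * (n₀ : Γ) * (c'⁻¹ * c)⁻¹
        = c'⁻¹ * (c * (n₀ : Γ) * c⁻¹) * c' := by group
      _ = c'⁻¹ * (n₀ : Γ)⁻¹ * c' := by rw [h1]
      _ = c' * (n₀ : Γ)⁻¹ * c'⁻¹ := by rw [hcinv']
      _ = ((n₀ : Γ)⁻¹)⁻¹ := h2
      _ = (n₀ : Γ) := inv_inv _
  have hd1 : c'⁻¹ * c = 1 := by
    by_contra hne
    exact hn₀ne (hF.2.2.2.2.2 _ hd hne _ hn₀mem hfix)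
  exact (inv_mul_eq_one.mp hd1).symm

end FrobeniusLemmas

/-- If `G` is a 2-Frobenius group with normal series `1 ◁ H ◁ K ◁ G` whose
prime graph equals that of `PGL(2,9)` (vertex set `{2,3,5}`, and single edge
`{2,5}`, i.e. an element of order `10` but none of order `6` or `15`), then
`π(K/H) = {3}` and `π(H) ∪ π(G/K) ⊆ {2,5}`. -/
theorem twoFrobenius_primeGraph_PGL29 (G : Type*) [Group G] [Finite G]
    (H K : Subgroup G) [H.Normal] [K.Normal]
    (h2F : Is2FrobeniusWith G H K)
    (hπ : {p : ℕ | p.Prime ∧ p ∣ Nat.card G} = ({2, 3, 5} : Set ℕ))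
    (h10 : ∃ g : G, orderOf g = 10)
    (h6 : ¬(∃ g : G, orderOf g = 6)) (h15 : ¬(∃ g : G, orderOf g = 15)) :
    {p : ℕ | p.Prime ∧ p ∣ H.relIndex K} = ({3} : Set ℕ) ∧
    {p : ℕ | p.Prime ∧ (p ∣ Nat.card H ∨ p ∣ K.index)} ⊆ ({2, 5} : Set ℕ) := by
  classical
  obtain ⟨hHK, ⟨C, hFK⟩, ⟨C', hFG⟩⟩ := h2F
  haveI hN₁norm : (H.subgroupOf K).Normal := hFK.1
  haveI hNbnorm : (K.map (QuotientGroup.mk' H)).Normal := hFG.1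
  set N₁ := H.subgroupOf K with hN₁def
  set Nb := K.map (QuotientGroup.mk' H) with hNbdef
  set f : ↥K →* G ⧸ H := (QuotientGroup.mk' H).comp K.subtype with hfdef
  have hfker : f.ker = N₁ := by
    ext x
    simp only [f, MonoidHom.mem_ker, MonoidHom.comp_apply, Subgroup.coe_subtype,
      QuotientGroup.mk'_apply, QuotientGroup.eq_one_iff, hN₁def, Subgroup.mem_subgroupOf]
  have hfrange : f.range = Nb := by
    ext y
    simp only [f, MonoidHom.mem_range, MonoidHom.comp_apply, Subgroup.coe_subtype,
      QuotientGroup.mk'_apply, hNbdef, Subgroup.mem_map, Subtype.exists]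
    constructor
    · rintro ⟨x, hx, rfl⟩
      exact ⟨x, hx, rfl⟩
    · rintro ⟨x, hx, rfl⟩
      exact ⟨x, hx, rfl⟩
  -- relindex equals card of the kernel of G/H
  have hrel : H.relIndex K = Nat.card ↥Nb := by
    calc H.relIndex K = Nat.card (↥K ⧸ N₁) := rfl
      _ = Nat.card ↥f.range := by
          rw [← hfker]
          exact Nat.card_congr (QuotientGroup.quotientKerEquivRange f).toEquiv
      _ = Nat.card ↥Nb := by rw [hfrange]
  have hCcard : Nat.card ↥C = H.relIndex K :=
    (frob_index_eq_card_compl hFK.1 hFK.2.1 hFK.2.2.1).symm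
  have hC'card : Nat.card ↥C' = Nb.index :=
    (frob_index_eq_card_compl hFG.1 hFG.2.1 hFG.2.2.1).symm
  have hcardN₁ : Nat.card ↥N₁ = Nat.card ↥H :=
    Nat.card_congr (Subgroup.subgroupOfEquivOfLe hHK).toEquiv
  -- K.index = Nb.index
  have hKindex : K.index = Nb.index := by
    have h1 : Nat.card ↥K * K.index = Nat.card G := K.card_mul_index
    have h2 : Nat.card ↥H * H.index = Nat.card G := H.card_mul_index
    have h3 : Nat.card ↥Nb * Nb.index = Nat.card (G ⧸ H) := Nb.card_mul_index
    have h4 : Nat.card ↥N₁ * N₁.index = Nat.card ↥K := N₁.card_mul_index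
    have h7 : N₁.index = Nat.card ↥Nb := hrel
    have e1 : (Nat.card ↥H * Nat.card ↥Nb) * K.index = Nat.card G := by
      rw [← hcardN₁, ← h7, h4, h1]
    have e2 : (Nat.card ↥H * Nat.card ↥Nb) * Nb.index = Nat.card G := by
      rw [mul_assoc, h3, ← H.index_eq_card, h2]
    have hpos : 0 < Nat.card ↥H * Nat.card ↥Nb :=
      Nat.mul_pos Nat.card_pos Nat.card_pos
    exact Nat.eq_of_mul_eq_mul_left hpos (e1.trans e2.symm)
  have hreldvdG : H.relIndex K ∣ Nat.card G := by
    rw [hrel]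
    exact (Nb.card_subgroup_dvd_card).trans (H.index_eq_card ▸ H.index_dvd_card)
  -- membership in {2,3,5}
  have h235 : ∀ {p : ℕ}, p.Prime → p ∣ Nat.card G → p = 2 ∨ p = 3 ∨ p = 5 := by
    intro p hp hd
    have : p ∈ ({2, 3, 5} : Set ℕ) := by rw [← hπ]; exact ⟨hp, hd⟩
    simpa using this
  -- uniqueness of involutions in Nb
  have huniq : ∀ x ∈ Nb, ∀ y ∈ Nb, orderOf x = 2 → orderOf y = 2 → x = y := by
    have hrep : ∀ x ∈ Nb, orderOf x = 2 →
        ∃ c : ↥K, c ∈ C ∧ c * c = 1 ∧ c ≠ 1 ∧ f c = x := by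
      intro x hx hx2
      obtain ⟨k, hkK, hk⟩ := Subgroup.mem_map.mp hx
      have hmem : (⟨k, hkK⟩ : ↥K) ∈ ((N₁ : Set ↥K) * (C : Set ↥K)) := by
        rw [← Subgroup.normal_mul]
        exact hFK.2.2.1.ge (Subgroup.mem_top _)
      rw [Set.mem_mul] at hmem
      obtain ⟨n, hn, c, hc, hnc⟩ := hmem
      have hfn : f n = 1 := by
        have : n ∈ f.ker := by rw [hfker]; exact hn
        exact this
      have hfc : f c = x := by
        calc f c = f n * f c := by rw [hfn, one_mul]
          _ = f (n * c) := (map_mul f n c).symm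
          _ = f ⟨k, hkK⟩ := by rw [hnc]
          _ = x := hk
      have hx2' : x * x = 1 := by
        have := pow_orderOf_eq_one x
        rwa [hx2, pow_two] at this
      have hcc : c * c = 1 := by
        have h1 : f (c * c) = 1 := by rw [map_mul, hfc, hx2']
        have h2 : c * c ∈ f.ker := h1
        rw [hfker] at h2
        have h3 : c * c ∈ N₁ ⊓ C := ⟨h2, C.mul_mem hc hc⟩
        rw [hFK.2.1] at h3
        exact Subgroup.mem_bot.mp h3
      have hcne : c ≠ 1 := by
        rintro rfl
        rw [map_one] at hfc
        rw [← hfc, orderOf_one] at hx2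
        norm_num at hx2
      exact ⟨c, hc, hcc, hcne, hfc⟩
    intro x hx y hy hx2 hy2
    obtain ⟨c, hc, hcc, hc1, rfl⟩ := hrep x hx hx2
    obtain ⟨c', hc', hc'c', hc'1, rfl⟩ := hrep _ hy hy2
    rw [frob_unique_involution hFK hc hc' hcc hc'c' hc1 hc'1]
  -- 2 does not divide the relative index
  have h2rel : ¬ 2 ∣ H.relIndex K := by
    intro h2
    rw [hrel] at h2
    haveI : Fintype ↥Nb := Fintype.ofFinite _
    rw [Nat.card_eq_fintype_card] at h2
    haveI : Fact (Nat.Prime 2) := ⟨Nat.prime_two⟩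
    obtain ⟨z₀, hz₀⟩ := exists_prime_orderOf_dvd_card 2 h2
    have hz2 : orderOf (z₀ : G ⧸ H) = 2 :=
      hz₀ ▸ orderOf_injective Nb.subtype Nb.subtype_injective z₀
    have hzmem : (z₀ : G ⧸ H) ∈ Nb := z₀.2
    obtain ⟨c₁, hc₁1⟩ := Subgroup.ne_bot_iff_exists_ne_one.mp hFG.2.2.2.2.1
    have hc₁C : (c₁ : G ⧸ H) ∈ C' := c₁.2
    have hc₁ne : (c₁ : G ⧸ H) ≠ 1 := fun h => hc₁1 (Subtype.ext h)
    have hconjmem : (c₁ : G ⧸ H) * (z₀ : G ⧸ H) * (c₁ : G ⧸ H)⁻¹ ∈ Nb :=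
      hNbnorm.conj_mem _ hzmem _
    have hconjord : orderOf ((c₁ : G ⧸ H) * (z₀ : G ⧸ H) * (c₁ : G ⧸ H)⁻¹) = 2 := by
      have h := orderOf_injective (MulAut.conj (c₁ : G ⧸ H)).toMonoidHom
        (MulAut.conj (c₁ : G ⧸ H)).injective (z₀ : G ⧸ H)
      simpa [MulAut.conj_apply, hz2] using h
    have heq : (c₁ : G ⧸ H) * (z₀ : G ⧸ H) * (c₁ : G ⧸ H)⁻¹ = (z₀ : G ⧸ H) :=
      huniq _ hconjmem _ hzmem hconjord hz2
    have hz1 : (z₀ : G ⧸ H) = 1 := hFG.2.2.2.2.2 _ hc₁C hc₁ne _ hzmem heq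
    rw [hz1, orderOf_one] at hz2
    norm_num at hz2
  -- coprimality transfers
  have hrelH : ∀ {p : ℕ}, p.Prime → p ∣ H.relIndex K → ¬ p ∣ Nat.card ↥H := by
    intro p hp hpr hpH
    have hpC : p ∣ Nat.card ↥C := by rw [hCcard]; exact hpr
    exact frob_not_dvd_card_kernel hFK hp hpC (hcardN₁ ▸ hpH)
  have hrelIdx : ∀ {p : ℕ}, p.Prime → p ∣ H.relIndex K → ¬ p ∣ K.index := by
    intro p hp hpr hpI
    have hpNb : p ∣ Nat.card ↥Nb := by rw [← hrel]; exact hpr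
    have hpC' : p ∣ Nat.card ↥C' := by rw [hC'card, ← hKindex]; exact hpI
    exact frob_not_dvd_card_kernel hFG hp hpC' hpNb
  -- relindex is not 1
  have hrelne1 : H.relIndex K ≠ 1 := by
    rw [hrel]
    intro h
    exact hFG.2.2.2.1 (Subgroup.card_eq_one.mp h)
  -- 5 does not divide the relative index
  have h5rel : ¬ 5 ∣ H.relIndex K := by
    intro h5
    have hp5 : Nat.Prime 5 := by norm_num
    have hp5H : ¬ 5 ∣ Nat.card ↥H := hrelH hp5 h5
    have hp5I : ¬ 5 ∣ K.index := hrelIdx hp5 h5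
    obtain ⟨g, hg⟩ := h10
    have hoa : orderOf (g ^ 2) = 5 := by rw [orderOf_pow, hg]; norm_num
    have hob : orderOf (g ^ 5) = 2 := by rw [orderOf_pow, hg]; norm_num
    have haK : g ^ 2 ∈ K := by
      have h1 : orderOf ((QuotientGroup.mk' K) (g ^ 2)) ∣ 5 :=
        hoa ▸ orderOf_map_dvd (QuotientGroup.mk' K) (g ^ 2)
      rcases (hp5.eq_one_or_self_of_dvd _ h1) with h | h
      · exact (QuotientGroup.eq_one_iff (g ^ 2)).mp (orderOf_eq_one_iff.mp h)
      · exfalso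
        apply hp5I
        have h2 : orderOf ((QuotientGroup.mk' K) (g ^ 2)) ∣ Nat.card (G ⧸ K) :=
          orderOf_dvd_natCard _
        rw [← h, K.index_eq_card]
        exact h2
    have hanotH : g ^ 2 ∉ H := by
      intro haH
      apply hp5H
      have h1 : orderOf (⟨g ^ 2, haH⟩ : ↥H) = 5 :=
        (orderOf_injective H.subtype H.subtype_injective _).symm.trans hoa
      exact h1 ▸ orderOf_dvd_natCard _
    have hcomm : g ^ 5 * g ^ 2 * (g ^ 5)⁻¹ = g ^ 2 := by group
    have habar_mem : (QuotientGroup.mk' H) (g ^ 2) ∈ Nb :=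
      Subgroup.mem_map.mpr ⟨g ^ 2, haK, rfl⟩
    have habar_ne : (QuotientGroup.mk' H) (g ^ 2) ≠ 1 := by
      intro h
      exact hanotH ((QuotientGroup.eq_one_iff (g ^ 2)).mp h)
    have hbconj : (QuotientGroup.mk' H) (g ^ 5) * (QuotientGroup.mk' H) (g ^ 2) *
        ((QuotientGroup.mk' H) (g ^ 5))⁻¹ = (QuotientGroup.mk' H) (g ^ 2) := by
      have h := congrArg (QuotientGroup.mk' H) hcomm
      rwa [map_mul, map_mul, map_inv] at h
    have hbbar_mem : (QuotientGroup.mk' H) (g ^ 5) ∈ Nb :=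
      frob_mem_of_conj_eq hFG habar_mem habar_ne hbconj
    have hbK : g ^ 5 ∈ K := by
      obtain ⟨k, hkK, hk⟩ := Subgroup.mem_map.mp hbbar_mem
      have hkb : k⁻¹ * g ^ 5 ∈ H := by
        rw [QuotientGroup.mk'_apply, QuotientGroup.mk'_apply] at hk
        exact QuotientGroup.eq.mp hk
      have := K.mul_mem hkK (hHK hkb)
      simpa using this
    have hoA : orderOf (⟨g ^ 2, haK⟩ : ↥K) = 5 :=
      (orderOf_injective K.subtype K.subtype_injective ⟨g ^ 2, haK⟩).symm.trans hoa
    have hoB : orderOf (⟨g ^ 5, hbK⟩ : ↥K) = 2 :=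
      (orderOf_injective K.subtype K.subtype_injective ⟨g ^ 5, hbK⟩).symm.trans hob
    have hBmem : (⟨g ^ 5, hbK⟩ : ↥K) ∈ N₁ := by
      have h1 : orderOf ((QuotientGroup.mk' N₁) (⟨g ^ 5, hbK⟩ : ↥K)) ∣ 2 :=
        hoB ▸ orderOf_map_dvd (QuotientGroup.mk' N₁) _
      rcases (Nat.prime_two.eq_one_or_self_of_dvd _ h1) with h | h
      · exact (QuotientGroup.eq_one_iff _).mp (orderOf_eq_one_iff.mp h)
      · exfalso
        apply h2rel
        have h2 : orderOf ((QuotientGroup.mk' N₁) (⟨g ^ 5, hbK⟩ : ↥K)) ∣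
            Nat.card (↥K ⧸ N₁) := orderOf_dvd_natCard _
        rw [← h]
        exact h2
    have hBne : (⟨g ^ 5, hbK⟩ : ↥K) ≠ 1 := by
      intro h
      rw [h, orderOf_one] at hoB
      norm_num at hoB
    have hABconj : (⟨g ^ 2, haK⟩ : ↥K) * (⟨g ^ 5, hbK⟩ : ↥K) * (⟨g ^ 2, haK⟩ : ↥K)⁻¹ =
        (⟨g ^ 5, hbK⟩ : ↥K) := by
      ext
      show g ^ 2 * g ^ 5 * (g ^ 2)⁻¹ = g ^ 5
      group
    have hAmem : (⟨g ^ 2, haK⟩ : ↥K) ∈ N₁ :=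
      frob_mem_of_conj_eq hFK hBmem hBne hABconj
    exact hanotH (Subgroup.mem_subgroupOf.mp hAmem)
  -- 3 divides the relative index
  have h3rel : 3 ∣ H.relIndex K := by
    have hpr := Nat.minFac_prime hrelne1
    have hd := Nat.minFac_dvd (H.relIndex K)
    rcases h235 hpr (hd.trans hreldvdG) with h | h | h
    · exact absurd (h ▸ hd) h2rel
    · exact h ▸ hd
    · exact absurd (h ▸ hd) h5rel
  constructor
  · ext p
    simp only [Set.mem_setOf_eq, Set.mem_singleton_iff]
    constructor
    · rintro ⟨hp, hd⟩
      rcases h235 hp (hd.trans hreldvdG) with h | h | h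
      · exact absurd (h ▸ hd) h2rel
      · exact h
      · exact absurd (h ▸ hd) h5rel
    · rintro rfl
      exact ⟨Nat.prime_three, h3rel⟩
  · rintro p ⟨hp, hd⟩
    have hdG : p ∣ Nat.card G := by
      rcases hd with h | h
      · exact h.trans H.card_subgroup_dvd_card
      · exact h.trans K.index_dvd_card
    rcases h235 hp hdG with h | h | h
    · simp [h]
    · exfalso
      subst h
      rcases hd with h | h
      · exact hrelH Nat.prime_three h3rel h
      · exact hrelIdx Nat.prime_three h3rel h
    · simp [h]
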